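/- Let n ≥ 5 and use coordinates (x, p0, p1, …, p_{n−3}, q) on ℝ^n. Consider the smooth vector fields X1 = ∂/∂x + Σ_{i=0}^{n−4} p_{i+1}·∂/∂p_i + (p_{n−3})²·∂/∂q and X2 = ∂/∂p_{n−3}, which span the rank 2 distribution D associated with the underdetermined ODE z′(x) = (y^{(n−3)}(x))². Then at every point of ℝ^n: (1) the span of X1, X2 and [X1, X2] is 3-dimensional; (2) the span of X1, X2 together with all iterated Lie brackets of X1, X2 of length at most 3 is 5-dimensional; (3) the span of all iterated Lie brackets of X1 and X2 is all of ℝ^n, i.e. the distribution is completely nonholonomic (bracket-generating). -/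

import Mathlib

/-- A (not necessarily smooth) vector field on `ℝ^n`. -/
def VF (n : ℕ) := (Fin n → ℝ) → (Fin n → ℝ)

/-- The Lie bracket of two vector fields `V, W` on `ℝ^n`:
`[V,W](x) = DW(x)·V(x) − DV(x)·W(x)`. -/
noncomputable def vfBracket {n : ℕ} (V W : VF n) : VF n :=
  fun z => fderiv ℝ W z (V z) - fderiv ℝ V z (W z)

/-- In coordinates `(x, p₀, …, p_{n−3}, q)` on `ℝ^n` (coordinate `0` is `x`,
coordinate `i+1` is `p_i` for `0 ≤ i ≤ n−3`, coordinate `n−1` is `q`),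
the vector field `X₁ = ∂/∂x + Σ_{i=0}^{n−4} p_{i+1} ∂/∂p_i + (p_{n−3})² ∂/∂q`
associated with the underdetermined ODE `z′(x) = (y^{(n−3)}(x))²`. -/
noncomputable def fieldX1 (n : ℕ) : VF n := fun z j =>
  if h0 : (j : ℕ) = 0 then 1
  else if h1 : (j : ℕ) = n - 1 then (z ⟨n - 2, by have := j.isLt; omega⟩) ^ 2
  else if (j : ℕ) = n - 2 then 0
  else z ⟨(j : ℕ) + 1, by have := j.isLt; omega⟩

/-- The vector field `X₂ = ∂/∂p_{n−3}`. -/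
def fieldX2 (n : ℕ) : VF n := fun _ j => if (j : ℕ) = n - 2 then 1 else 0

/-- `IsIterBrkt X1 X2 k V` means that `V` is an iterated Lie bracket of the
vector fields `X1`, `X2` of length `k`. -/
inductive IsIterBrkt {n : ℕ} (X1 X2 : VF n) : ℕ → VF n → Prop
  | base1 : IsIterBrkt X1 X2 1 X1
  | base2 : IsIterBrkt X1 X2 1 X2
  | brkt {k l : ℕ} {V W : VF n} : IsIterBrkt X1 X2 k V → IsIterBrkt X1 X2 l W →
      IsIterBrkt X1 X2 (k + l) (vfBracket V W)

def Efc (n m : ℕ) (c : ℝ) : ((Fin n → ℝ) → (Fin n → ℝ)) :=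
  fun _ j => if (j : ℕ) = m then c else 0

noncomputable def Yf (n : ℕ) : ((Fin n → ℝ) → (Fin n → ℝ)) := fun z j =>
  if (j : ℕ) = n - 3 then -1
  else if (j : ℕ) = n - 1 then -2 * z ⟨n - 2, by have := j.isLt; omega⟩
  else 0

noncomputable def L1 (n : ℕ) (z : Fin n → ℝ) : (Fin n → ℝ) →L[ℝ] (Fin n → ℝ) :=
  ContinuousLinearMap.pi fun j =>
    if h0 : (j : ℕ) = 0 then 0
    else if h1 : (j : ℕ) = n - 1 then
      (2 * z ⟨n - 2, by have := j.isLt; omega⟩) •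
        ContinuousLinearMap.proj ⟨n - 2, by have := j.isLt; omega⟩
    else if (j : ℕ) = n - 2 then 0
    else ContinuousLinearMap.proj ⟨(j : ℕ) + 1, by have := j.isLt; omega⟩

noncomputable def LY (n : ℕ) : (Fin n → ℝ) →L[ℝ] (Fin n → ℝ) :=
  ContinuousLinearMap.pi fun j =>
    if (j : ℕ) = n - 1 then
      (-2 : ℝ) • ContinuousLinearMap.proj ⟨n - 2, by have := j.isLt; omega⟩
    else 0

lemma L1_apply (n : ℕ) (z v : Fin n → ℝ) (j : Fin n) :
    L1 n z v j =
      if h0 : (j : ℕ) = 0 then 0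
      else if h1 : (j : ℕ) = n - 1 then
        2 * z ⟨n - 2, by have := j.isLt; omega⟩ * v ⟨n - 2, by have := j.isLt; omega⟩
      else if (j : ℕ) = n - 2 then 0
      else v ⟨(j : ℕ) + 1, by have := j.isLt; omega⟩ := by
  simp only [L1, ContinuousLinearMap.pi_apply]
  split_ifs <;>
    simp [ContinuousLinearMap.smul_apply, ContinuousLinearMap.proj_apply, mul_assoc]

lemma LY_apply (n : ℕ) (v : Fin n → ℝ) (j : Fin n) :
    LY n v j = if (j : ℕ) = n - 1 then -2 * v ⟨n - 2, by have := j.isLt; omega⟩ else 0 := by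
  simp only [LY, ContinuousLinearMap.pi_apply]
  split_ifs <;>
    simp [ContinuousLinearMap.smul_apply, ContinuousLinearMap.proj_apply]

lemma hasF_Yf (n : ℕ) (hn : 5 ≤ n) (z : Fin n → ℝ) : HasFDerivAt (Yf n) (LY n) z := by
  rw [show Yf n = fun z (j : Fin n) => Yf n z j from rfl]
  rw [LY, hasFDerivAt_pi]
  intro j
  by_cases h3 : (j : ℕ) = n - 3
  · have hne : ¬ ((j : ℕ) = n - 1) := by omega
    simp only [Yf, if_pos h3, if_neg hne]
    exact hasFDerivAt_const _ _
  · by_cases h1 : (j : ℕ) = n - 1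
    · simp only [Yf, if_neg h3, if_pos h1]
      exact (hasFDerivAt_apply _ z).const_mul ((-2 : ℝ))
    · simp only [Yf, if_neg h3, if_neg h1]
      exact hasFDerivAt_const _ _


lemma hasF_X1 (n : ℕ) (z : Fin n → ℝ) : HasFDerivAt (fieldX1 n) (L1 n z) z := by
  rw [show fieldX1 n = fun z (j : Fin n) => fieldX1 n z j from rfl]
  rw [L1, hasFDerivAt_pi]
  intro j
  by_cases h0 : (j : ℕ) = 0
  · simp only [fieldX1, h0, dif_pos]
    exact hasFDerivAt_const _ _
  · by_cases h1 : (j : ℕ) = n - 1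
    · simp only [fieldX1, dif_neg h0, dif_pos h1]
      have hp := hasFDerivAt_apply (𝕜 := ℝ) (⟨n - 2, by have := j.isLt; omega⟩ : Fin n) z
      have h2 := hp.mul hp
      have hfn : (fun x : Fin n → ℝ => (x (⟨n - 2, by have := j.isLt; omega⟩ : Fin n)) ^ 2)
          = fun x : Fin n → ℝ => x (⟨n - 2, by have := j.isLt; omega⟩ : Fin n) *
            x (⟨n - 2, by have := j.isLt; omega⟩ : Fin n) := by
        funext x; ring
      rw [hfn]
      exact h2.congr_fderiv (by rw [two_mul, add_smul])
    · by_cases h2 : (j : ℕ) = n - 2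
      · simp only [fieldX1, dif_neg h0, dif_neg h1, if_pos h2]
        exact hasFDerivAt_const _ _
      · simp only [fieldX1, dif_neg h0, dif_neg h1, if_neg h2]
        exact hasFDerivAt_apply _ z

lemma fderiv_X2 (n : ℕ) (z : Fin n → ℝ) : fderiv ℝ (fieldX2 n) z = 0 := by
  unfold fieldX2; exact fderiv_const_apply _

lemma fderiv_Efc (n m : ℕ) (c : ℝ) (z : Fin n → ℝ) : fderiv ℝ (Efc n m c) z = 0 := by
  unfold Efc; exact fderiv_const_apply _

lemma bX1X2 (n : ℕ) (hn : 5 ≤ n) : vfBracket (fieldX1 n) (fieldX2 n) = Yf n := by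
  funext z j
  simp only [vfBracket, (hasF_X1 n z).fderiv, fderiv_X2, ContinuousLinearMap.zero_apply,
    Pi.sub_apply, Pi.zero_apply, L1_apply, Yf]
  by_cases h0 : (j : ℕ) = 0
  · simp [h0, fieldX2, show ¬((0:ℕ) = n - 3) by omega, show ¬((0:ℕ) = n - 1) by omega]
  · by_cases h1 : (j : ℕ) = n - 1
    · simp [h0, h1, fieldX2, show ¬(n - 1 = n - 3) by omega, show ¬(n - 1 = 0) by omega]
    · by_cases h2 : (j : ℕ) = n - 2
      · simp [h0, h1, h2, show ¬(n - 2 = n - 3) by omega, show ¬(n - 2 = 0) by omega,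
          show ¬(n - 2 = n - 1) by omega]
      · by_cases h3 : (j : ℕ) = n - 3
        · simp [h0, h1, h2, h3, fieldX2, show n - 3 + 1 = n - 2 by omega,
            show ¬(n - 3 = 0) by omega, show ¬(n - 3 = n - 1) by omega,
            show ¬(n - 3 = n - 2) by omega]
        · simp [h0, h1, h2, h3, fieldX2, show ¬((j:ℕ) + 1 = n - 2) by omega]

lemma bX1Y (n : ℕ) (hn : 5 ≤ n) : vfBracket (fieldX1 n) (Yf n) = Efc n (n - 4) 1 := by
  funext z j
  simp only [vfBracket, (hasF_X1 n z).fderiv, (hasF_Yf n hn z).fderiv,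
    Pi.sub_apply, L1_apply, LY_apply, Efc]
  by_cases h1 : (j : ℕ) = n - 1
  · -- LY (X1 z) at j : -2 * (X1 z)_{n-2} = 0 ; L1 (Yf z) at j : 2*z*(Yf z)_{n-2} = 0
    simp [h1, fieldX1, Yf, show ¬((n:ℕ) - 1 = 0) by omega, show ¬(n - 2 = 0) by omega,
      show ¬(n - 2 = n - 1) by omega, show ¬(n - 2 = n - 3) by omega,
      show ¬(n - 1 = n - 4) by omega]
  · by_cases h0 : (j : ℕ) = 0
    · simp [h0, h1, show ¬((0:ℕ) = n - 4) by omega, show ¬((0:ℕ) = n - 1) by omega]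
    · by_cases h2 : (j : ℕ) = n - 2
      · simp [h1, h2, show ¬(n - 2 = 0) by omega, show ¬(n - 2 = n - 4) by omega,
          show ¬(n - 2 = n - 1) by omega]
      · by_cases h4 : (j : ℕ) = n - 4
        · simp [h0, h1, h2, h4, Yf, show n - 4 + 1 = n - 3 by omega,
            show ¬(n - 4 = 0) by omega, show ¬(n - 4 = n - 1) by omega,
            show ¬(n - 4 = n - 2) by omega]
        · simp [h0, h1, h2, h4, Yf, show ¬((j:ℕ) + 1 = n - 3) by omega,
            show ¬((j:ℕ) + 1 = n - 1) by omega]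

lemma bX2Y (n : ℕ) (hn : 5 ≤ n) : vfBracket (fieldX2 n) (Yf n) = Efc n (n - 1) (-2) := by
  funext z j
  simp only [vfBracket, fderiv_X2, (hasF_Yf n hn z).fderiv, ContinuousLinearMap.zero_apply,
    Pi.sub_apply, Pi.zero_apply, LY_apply, Efc, sub_zero]
  by_cases h1 : (j : ℕ) = n - 1
  · simp [h1, fieldX2]
  · simp [h1]

lemma bX1E (n : ℕ) (hn : 5 ≤ n) (m : ℕ) (hm2 : 2 ≤ m) (hm3 : m ≤ n - 3) (c : ℝ) :
    vfBracket (fieldX1 n) (Efc n m c) = Efc n (m - 1) (-c) := by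
  funext z j
  simp only [vfBracket, (hasF_X1 n z).fderiv, fderiv_Efc, ContinuousLinearMap.zero_apply,
    Pi.sub_apply, Pi.zero_apply, L1_apply, Efc, zero_sub]
  by_cases h0 : (j : ℕ) = 0
  · simp [h0, show ¬((0:ℕ) = m - 1) by omega]
  · by_cases h1 : (j : ℕ) = n - 1
    · simp [h0, h1, show ¬(n - 2 = m) by omega, show ¬(n - 1 = m - 1) by omega]
    · by_cases h2 : (j : ℕ) = n - 2
      · simp [h0, h1, h2, show ¬(n - 2 = m - 1) by omega, show ¬(n - 2 = n - 1) by omega]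
      · by_cases hm : (j : ℕ) = m - 1
        · simp [h0, h1, h2, hm, show m - 1 + 1 = m by omega, show ¬(m - 1 = 0) by omega,
            show ¬(m - 1 = n - 1) by omega, show ¬(m - 1 = n - 2) by omega]
        · simp [h0, h1, h2, hm, show ¬((j:ℕ) + 1 = m) by omega]


lemma vb_swap {n : ℕ} (V W : VF n) (z : Fin n → ℝ) :
    vfBracket W V z = -(vfBracket V W z) := by
  simp [vfBracket, neg_sub]

lemma vb_neg_right {n : ℕ} (V W : VF n) (z : Fin n → ℝ) :
    vfBracket V (fun x => -(W x)) z = -(vfBracket V W z) := by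
  have h : fderiv ℝ (fun x => -(W x)) z = -fderiv ℝ W z := fderiv_fun_neg (f := W)
  simp only [vfBracket, h, ContinuousLinearMap.neg_apply, map_neg]
  abel

lemma vb_zero_right {n : ℕ} (V : VF n) (z : Fin n → ℝ) :
    vfBracket V (fun _ _ => (0:ℝ)) z = 0 := by
  have h : fderiv ℝ (fun _ : Fin n → ℝ => (fun _ : Fin n => (0:ℝ))) z = 0 :=
    fderiv_const_apply _
  have h2 : ((fun (_ : Fin n → ℝ) (_ : Fin n) => (0:ℝ)) z) = (0 : Fin n → ℝ) := rfl
  simp [vfBracket, h, h2]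

lemma vb_self {n : ℕ} (V : VF n) :
    vfBracket V V = fun _ _ => (0:ℝ) := by
  funext z
  exact sub_self _

lemma ib_pos {n : ℕ} {X1 X2 : VF n} {k : ℕ}
    {V : VF n} (h : IsIterBrkt X1 X2 k V) : 1 ≤ k := by
  induction h <;> omega

lemma ib_cases {n : ℕ} {X1 X2 : VF n} {k : ℕ}
    {V : VF n} (h : IsIterBrkt X1 X2 k V) :
    (k = 1 ∧ (V = X1 ∨ V = X2)) ∨
      ∃ a b U W, a + b = k ∧ IsIterBrkt X1 X2 a U ∧ IsIterBrkt X1 X2 b W ∧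
        1 ≤ a ∧ 1 ≤ b ∧ V = vfBracket U W := by
  cases h with
  | base1 => exact Or.inl ⟨rfl, Or.inl rfl⟩
  | base2 => exact Or.inl ⟨rfl, Or.inr rfl⟩
  | brkt h1 h2 =>
      exact Or.inr ⟨_, _, _, _, rfl, h1, h2, ib_pos h1, ib_pos h2, rfl⟩

lemma class1 {n : ℕ} {X1 X2 : VF n}
    {V : VF n} (h : IsIterBrkt X1 X2 1 V) :
    V = X1 ∨ V = X2 := by
  rcases ib_cases h with ⟨-, h⟩ | ⟨a, b, U, W, hab, hU, hW, ha, hb, -⟩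
  · exact h
  · omega

lemma class2 {n : ℕ} (hn : 5 ≤ n) {V : VF n}
    (h : IsIterBrkt (fieldX1 n) (fieldX2 n) 2 V) :
    V = (fun _ _ => (0:ℝ)) ∨ V = Yf n ∨ V = fun z => -(Yf n z) := by
  rcases ib_cases h with ⟨h1, -⟩ | ⟨a, b, U, W, hab, hU, hW, ha, hb, rfl⟩
  · omega
  · have ha1 : a = 1 := by omega
    have hb1 : b = 1 := by omega
    subst ha1; subst hb1
    rcases class1 hU with rfl | rfl <;> rcases class1 hW with rfl | rfl
    · exact Or.inl (vb_self _)
    · exact Or.inr (Or.inl (bX1X2 n hn))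
    · refine Or.inr (Or.inr ?_)
      funext z
      rw [vb_swap, bX1X2 n hn]
    · exact Or.inl (vb_self _)

lemma val3 {n : ℕ} (hn : 5 ≤ n) {V : VF n}
    (h : IsIterBrkt (fieldX1 n) (fieldX2 n) 3 V) (z : Fin n → ℝ) :
    V z = 0 ∨ V z = Efc n (n-4) 1 z ∨ V z = -(Efc n (n-4) 1 z) ∨
      V z = Efc n (n-1) (-2) z ∨ V z = -(Efc n (n-1) (-2) z) := by
  rcases ib_cases h with ⟨h1, -⟩ | ⟨a, b, U, W, hab, hU, hW, ha, hb, rfl⟩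
  · omega
  · have hab' : (a = 1 ∧ b = 2) ∨ (a = 2 ∧ b = 1) := by omega
    rcases hab' with ⟨ha1, hb2⟩ | ⟨ha2, hb1⟩
    · subst ha1; subst hb2
      rcases class1 hU with rfl | rfl <;>
        rcases class2 hn hW with rfl | rfl | rfl
      · exact Or.inl (vb_zero_right _ _)
      · exact Or.inr (Or.inl (by rw [bX1Y n hn]))
      · exact Or.inr (Or.inr (Or.inl (by erw [vb_neg_right, bX1Y n hn])))
      · exact Or.inl (vb_zero_right _ _)
      · exact Or.inr (Or.inr (Or.inr (Or.inl (by rw [bX2Y n hn]))))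
      · exact Or.inr (Or.inr (Or.inr (Or.inr (by erw [vb_neg_right, bX2Y n hn]))))
    · subst ha2; subst hb1
      rw [show (2 + 1 : ℕ) = 1 + 2 from rfl] at hab
      rcases class1 hW with rfl | rfl <;>
        rcases class2 hn hU with rfl | rfl | rfl
      all_goals erw [vb_swap]
      · erw [vb_zero_right]; exact Or.inl neg_zero
      · rw [bX1Y n hn]; exact Or.inr (Or.inr (Or.inl rfl))
      · erw [vb_neg_right, bX1Y n hn, neg_neg]; exact Or.inr (Or.inl rfl)
      · erw [vb_zero_right]; exact Or.inl neg_zero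
      · rw [bX2Y n hn]; exact Or.inr (Or.inr (Or.inr (Or.inr rfl)))
      · erw [vb_neg_right, bX2Y n hn, neg_neg]; exact Or.inr (Or.inr (Or.inr (Or.inl rfl)))

lemma chain (n : ℕ) (hn : 5 ≤ n) : ∀ t, t ≤ n - 5 →
    ∃ V, IsIterBrkt (fieldX1 n) (fieldX2 n) (3 + t) V ∧
      V = Efc n (n - 4 - t) ((-1 : ℝ) ^ t) := by
  intro t
  induction t with
  | zero =>
      intro _
      refine ⟨vfBracket (fieldX1 n) (vfBracket (fieldX1 n) (fieldX2 n)), ?_, ?_⟩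
      · have h := IsIterBrkt.brkt IsIterBrkt.base1
          (IsIterBrkt.brkt (X1 := fieldX1 n) (X2 := fieldX2 n)
            IsIterBrkt.base1 IsIterBrkt.base2)
        rwa [show (1 : ℕ) + (1 + 1) = 3 + 0 by norm_num] at h
      · rw [bX1X2 n hn, bX1Y n hn]
        norm_num
        rfl
  | succ t ih =>
      intro ht
      obtain ⟨V, hV, hVeq⟩ := ih (by omega)
      refine ⟨vfBracket (fieldX1 n) V, ?_, ?_⟩
      · have h := IsIterBrkt.brkt IsIterBrkt.base1 hV
        rwa [show 1 + (3 + t) = 3 + (t + 1) by omega] at h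
      · rw [hVeq, bX1E n hn (n - 4 - t) (by omega) (by omega)]
        have hidx : n - 4 - t - 1 = n - 4 - (t + 1) := by omega
        rw [hidx]
        congr 1
        rw [pow_succ]
        ring

/-- The rank 2 distribution on `ℝ^n` (`n ≥ 5`) spanned by `X₁, X₂` (the model
of the underdetermined ODE `z′(x) = (y^{(n−3)}(x))²`) satisfies, at every
point: `dim D² = 3`, `dim D³ = 5`, and it is completely nonholonomic
(bracket-generating). -/
theorem statement12 (n : ℕ) (hn : 5 ≤ n) :
    ∀ z : Fin n → ℝ,
      Module.finrank ℝ (Submodule.span ℝ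
          ({fieldX1 n z, fieldX2 n z, vfBracket (fieldX1 n) (fieldX2 n) z} :
            Set (Fin n → ℝ))) = 3 ∧
      Module.finrank ℝ (Submodule.span ℝ
          {v : Fin n → ℝ | ∃ k ≤ 3, ∃ V : VF n,
            IsIterBrkt (fieldX1 n) (fieldX2 n) k V ∧ v = V z}) = 5 ∧
      Submodule.span ℝ
          {v : Fin n → ℝ | ∃ k : ℕ, ∃ V : VF n,
            IsIterBrkt (fieldX1 n) (fieldX2 n) k V ∧ v = V z} = ⊤ := by
  intro z
  have hn2 : n - 2 < n := by omega
  -- basic iterated brackets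
  have t2 : IsIterBrkt (fieldX1 n) (fieldX2 n) 2 (vfBracket (fieldX1 n) (fieldX2 n)) :=
    IsIterBrkt.brkt IsIterBrkt.base1 IsIterBrkt.base2
  have t3a : IsIterBrkt (fieldX1 n) (fieldX2 n) 3
      (vfBracket (fieldX1 n) (vfBracket (fieldX1 n) (fieldX2 n))) :=
    IsIterBrkt.brkt IsIterBrkt.base1 t2
  have t3b : IsIterBrkt (fieldX1 n) (fieldX2 n) 3
      (vfBracket (fieldX2 n) (vfBracket (fieldX1 n) (fieldX2 n))) :=
    IsIterBrkt.brkt IsIterBrkt.base2 t2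
  -- vector identities
  have hYz : Yf n z = (-1 : ℝ) • Efc n (n-3) 1 z +
      (-(2 * z ⟨n - 2, hn2⟩)) • Efc n (n-1) 1 z := by
    funext j
    by_cases h3 : (j : ℕ) = n - 3
    · simp [Efc, Yf, h3, show ¬(n - 3 = n - 1) by omega]
    · by_cases h1 : (j : ℕ) = n - 1
      · simp [Efc, Yf, h1, h3, show ¬(n - 1 = n - 3) by omega]
      · simp [Efc, Yf, h1, h3]
  have hE3z : Efc n (n-3) 1 z = -(Yf n z) +
      (-(2 * z ⟨n - 2, hn2⟩)) • Efc n (n-1) 1 z := by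
    rw [hYz]; funext j; simp
  have hEm2 : Efc n (n-1) (-2) z = (-2 : ℝ) • Efc n (n-1) 1 z := by
    funext j; by_cases h : (j : ℕ) = n - 1 <;> simp [Efc, h]
  have hEhalf : Efc n (n-1) 1 z = (-(1:ℝ)/2) • Efc n (n-1) (-2) z := by
    funext j; by_cases h : (j : ℕ) = n - 1 <;> simp [Efc, h] <;> norm_num
  refine ⟨?_, ?_, ?_⟩
  · -- dimension 3
    rw [bX1X2 n hn]
    have hli : LinearIndependent ℝ ![fieldX1 n z, fieldX2 n z, Yf n z] := by
      rw [Fintype.linearIndependent_iff]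
      intro g hg
      have h0 := congrFun hg ⟨0, by omega⟩
      have h2 := congrFun hg ⟨n - 2, by omega⟩
      have h3 := congrFun hg ⟨n - 3, by omega⟩
      simp only [Fin.sum_univ_three, Pi.add_apply, Pi.smul_apply, smul_eq_mul,
        Pi.zero_apply, Matrix.cons_val_zero, Matrix.cons_val_one, Matrix.head_cons,
        Matrix.cons_val_two, Matrix.tail_cons] at h0 h2 h3
      simp only [fieldX1, fieldX2, Yf] at h0 h2 h3
      simp [show ¬((0:ℕ) = n - 2) by omega, show ¬((0:ℕ) = n - 3) by omega,
        show ¬((0:ℕ) = n - 1) by omega] at h0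
      simp [show ¬(n - 2 = 0) by omega, show ¬(n - 2 = n - 1) by omega,
        show ¬(n - 2 = n - 3) by omega] at h2
      simp [show ¬(n - 3 = 0) by omega, show ¬(n - 3 = n - 1) by omega,
        show ¬(n - 3 = n - 2) by omega] at h3
      have hg0 : g 0 = 0 := h0
      have hg1 : g 1 = 0 := by linarith
      have hg2 : g 2 = 0 := by
        rw [hg0] at h3; simpa using h3
      intro i; fin_cases i <;> assumption
    have hr : Set.range ![fieldX1 n z, fieldX2 n z, Yf n z]
        = {fieldX1 n z, fieldX2 n z, Yf n z} := by
      ext x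
      simp [Matrix.range_cons, Matrix.range_empty]
      tauto
    have h := finrank_span_eq_card hli
    rw [hr] at h
    simpa using h
  · -- dimension 5
    set f5 : Fin 5 → (Fin n → ℝ) := ![fieldX1 n z, Efc n (n-4) 1 z, Efc n (n-3) 1 z,
      Efc n (n-2) 1 z, Efc n (n-1) 1 z] with hf5
    have hli : LinearIndependent ℝ f5 := by
      rw [Fintype.linearIndependent_iff]
      intro g hg
      have e0 := congrFun hg ⟨0, by omega⟩
      have e4 := congrFun hg ⟨n - 4, by omega⟩
      have e3 := congrFun hg ⟨n - 3, by omega⟩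
      have e2 := congrFun hg ⟨n - 2, by omega⟩
      have e1 := congrFun hg ⟨n - 1, by omega⟩
      simp only [hf5, Fin.sum_univ_five, Pi.add_apply, Pi.smul_apply, smul_eq_mul,
        Pi.zero_apply, Matrix.cons_val_zero, Matrix.cons_val_one, Matrix.head_cons,
        Matrix.cons_val_two, Matrix.tail_cons, Matrix.cons_val_three,
        Matrix.cons_val_four] at e0 e4 e3 e2 e1
      simp only [fieldX1, Efc] at e0 e4 e3 e2 e1
      simp [show ¬((0:ℕ) = n - 1) by omega, show ¬((0:ℕ) = n - 2) by omega,
        show ¬((0:ℕ) = n - 3) by omega, show ¬((0:ℕ) = n - 4) by omega] at e0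
      simp [show ¬(n - 4 = 0) by omega, show ¬(n - 4 = n - 1) by omega,
        show ¬(n - 4 = n - 2) by omega, show ¬(n - 4 = n - 3) by omega] at e4
      simp [show ¬(n - 3 = 0) by omega, show ¬(n - 3 = n - 1) by omega,
        show ¬(n - 3 = n - 2) by omega, show ¬(n - 3 = n - 4) by omega] at e3
      simp [show ¬(n - 2 = 0) by omega, show ¬(n - 2 = n - 1) by omega,
        show ¬(n - 2 = n - 3) by omega, show ¬(n - 2 = n - 4) by omega] at e2
      simp [show ¬(n - 1 = 0) by omega, show ¬(n - 1 = n - 2) by omega,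
        show ¬(n - 1 = n - 3) by omega, show ¬(n - 1 = n - 4) by omega] at e1
      have hg0 : g 0 = 0 := e0
      have hg1 : g 1 = 0 := by rw [hg0] at e4; simpa using e4
      have hg2 : g 2 = 0 := by rw [hg0] at e3; simpa using e3
      have hg3 : g 3 = 0 := e2
      have hg4 : g 4 = 0 := by rw [hg0] at e1; simpa using e1
      intro i; fin_cases i <;> assumption
    set S3 : Set (Fin n → ℝ) := {v : Fin n → ℝ | ∃ k ≤ 3, ∃ V,
      IsIterBrkt (fieldX1 n) (fieldX2 n) k V ∧ v = V z} with hS3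
    have hr5 : Set.range f5 = {fieldX1 n z, Efc n (n-4) 1 z, Efc n (n-3) 1 z,
        Efc n (n-2) 1 z, Efc n (n-1) 1 z} := by
      ext x
      simp [hf5, Matrix.range_cons, Matrix.range_empty]
      tauto
    have w0 : fieldX1 n z ∈ Submodule.span ℝ (Set.range f5) :=
      Submodule.subset_span (by rw [hr5]; simp)
    have w1 : Efc n (n-4) 1 z ∈ Submodule.span ℝ (Set.range f5) :=
      Submodule.subset_span (by rw [hr5]; simp)
    have w2 : Efc n (n-3) 1 z ∈ Submodule.span ℝ (Set.range f5) :=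
      Submodule.subset_span (by rw [hr5]; simp)
    have w3 : Efc n (n-2) 1 z ∈ Submodule.span ℝ (Set.range f5) :=
      Submodule.subset_span (by rw [hr5]; simp)
    have w4 : Efc n (n-1) 1 z ∈ Submodule.span ℝ (Set.range f5) :=
      Submodule.subset_span (by rw [hr5]; simp)
    have wY : Yf n z ∈ Submodule.span ℝ (Set.range f5) := by
      rw [hYz]
      exact add_mem (Submodule.smul_mem _ _ w2) (Submodule.smul_mem _ _ w4)
    have mYz : Yf n z ∈ Submodule.span ℝ S3 :=
      Submodule.subset_span ⟨2, by omega, vfBracket (fieldX1 n) (fieldX2 n), t2,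
        by rw [bX1X2 n hn]⟩
    have mE1 : Efc n (n-1) 1 z ∈ Submodule.span ℝ S3 := by
      rw [hEhalf]
      refine Submodule.smul_mem _ _ (Submodule.subset_span
        ⟨3, by omega, _, t3b, ?_⟩)
      rw [bX1X2 n hn, bX2Y n hn]
    have key : Submodule.span ℝ S3 = Submodule.span ℝ (Set.range f5) := by
      apply le_antisymm
      · rw [Submodule.span_le]
        rintro v ⟨k, hk, V, hV, rfl⟩
        have hk13 : k = 1 ∨ k = 2 ∨ k = 3 := by have := ib_pos hV; omega
        rcases hk13 with rfl | rfl | rfl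
        · rcases class1 hV with rfl | rfl
          · exact w0
          · exact w3
        · rcases class2 hn hV with rfl | rfl | rfl
          · exact zero_mem _
          · exact wY
          · exact neg_mem wY
        · rcases val3 hn hV z with h | h | h | h | h <;> rw [h]
          · exact zero_mem _
          · exact w1
          · exact neg_mem w1
          · rw [hEm2]; exact Submodule.smul_mem _ _ w4
          · rw [hEm2]; exact neg_mem (Submodule.smul_mem _ _ w4)
      · rw [Submodule.span_le, hr5]
        rintro v hv
        simp only [Set.mem_insert_iff, Set.mem_singleton_iff] at hv
        rcases hv with rfl | rfl | rfl | rfl | rfl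
        · exact Submodule.subset_span ⟨1, by omega, fieldX1 n, IsIterBrkt.base1, rfl⟩
        · refine Submodule.subset_span ⟨3, by omega, _, t3a, ?_⟩
          rw [bX1X2 n hn, bX1Y n hn]
        · show Efc n (n-3) 1 z ∈ _
          rw [hE3z]
          exact add_mem (neg_mem mYz) (Submodule.smul_mem _ _ mE1)
        · exact Submodule.subset_span ⟨1, by omega, fieldX2 n, IsIterBrkt.base2, rfl⟩
        · exact mE1
    rw [key]
    have h := finrank_span_eq_card hli
    simpa using h
  · -- bracket generating
    set Sinf : Set (Fin n → ℝ) := {v : Fin n → ℝ | ∃ k : ℕ, ∃ V,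
      IsIterBrkt (fieldX1 n) (fieldX2 n) k V ∧ v = V z} with hSinf
    have mX1 : fieldX1 n z ∈ Submodule.span ℝ Sinf :=
      Submodule.subset_span ⟨1, fieldX1 n, IsIterBrkt.base1, rfl⟩
    have mE1 : Efc n (n-1) 1 z ∈ Submodule.span ℝ Sinf := by
      rw [hEhalf]
      refine Submodule.smul_mem _ _ (Submodule.subset_span ⟨3, _, t3b, ?_⟩)
      rw [bX1X2 n hn, bX2Y n hn]
    have mE3 : Efc n (n-3) 1 z ∈ Submodule.span ℝ Sinf := by
      rw [hE3z]
      refine add_mem (neg_mem (Submodule.subset_span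
        ⟨2, vfBracket (fieldX1 n) (fieldX2 n), t2, by rw [bX1X2 n hn]⟩))
        (Submodule.smul_mem _ _ mE1)
    have mEm : ∀ m, 1 ≤ m → m ≤ n - 1 → Efc n m 1 z ∈ Submodule.span ℝ Sinf := by
      intro m hm1 hm2
      by_cases hA : m = n - 1
      · subst hA; exact mE1
      · by_cases hB : m = n - 2
        · subst hB
          exact Submodule.subset_span ⟨1, fieldX2 n, IsIterBrkt.base2, rfl⟩
        · by_cases hC : m = n - 3
          · subst hC; exact mE3
          · obtain ⟨V, hV, hVeq⟩ := chain n hn (n - 4 - m) (by omega)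
            have hm' : n - 4 - (n - 4 - m) = m := by omega
            rw [hm'] at hVeq
            have hmem : V z ∈ Submodule.span ℝ Sinf :=
              Submodule.subset_span ⟨3 + (n - 4 - m), V, hV, rfl⟩
            rw [hVeq] at hmem
            have hsq : ((-1:ℝ) ^ (n - 4 - m)) • Efc n m ((-1:ℝ) ^ (n - 4 - m)) z
                = Efc n m 1 z := by
              funext j
              by_cases h : (j : ℕ) = m <;>
                simp [Efc, h, ← pow_add, Even.neg_one_pow ⟨n - 4 - m, rfl⟩]
            rw [← hsq]
            exact Submodule.smul_mem _ _ hmem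
    have basis_decomp : ∀ w : Fin n → ℝ, w = ∑ i : Fin n, w i • Efc n (i : ℕ) 1 z := by
      intro w
      conv_lhs => rw [pi_eq_sum_univ w]
      refine Finset.sum_congr rfl fun i _ => ?_
      congr 1
      funext j
      by_cases h : i = j
      · subst h; simp [Efc]
      · have h' : ¬((j : ℕ) = (i : ℕ)) := fun hh => h (Fin.ext hh.symm)
        simp [Efc, h, h']
    have mE0 : Efc n 0 1 z ∈ Submodule.span ℝ Sinf := by
      have hdecomp := basis_decomp (fieldX1 n z)
      rw [← Finset.add_sum_erase Finset.univ _
        (Finset.mem_univ (⟨0, by omega⟩ : Fin n))] at hdecomp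
      have h00 : fieldX1 n z ⟨0, by omega⟩ = 1 := by simp [fieldX1]
      rw [h00, one_smul] at hdecomp
      simp only [show ((⟨0, by omega⟩ : Fin n) : ℕ) = 0 from rfl] at hdecomp
      have heq : Efc n 0 1 z = fieldX1 n z -
          ∑ i ∈ Finset.univ.erase (⟨0, by omega⟩ : Fin n), fieldX1 n z i • Efc n (i : ℕ) 1 z :=
        eq_sub_of_add_eq hdecomp.symm
      rw [heq]
      refine sub_mem mX1 (Submodule.sum_mem _ fun i hi => Submodule.smul_mem _ _ (mEm _ ?_ ?_))
      · have h1 : i ≠ (⟨0, by omega⟩ : Fin n) := (Finset.mem_erase.1 hi).1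
        have h2 : ¬((i : ℕ) = 0) := fun hh => h1 (Fin.ext hh)
        omega
      · have := i.isLt; omega
    rw [eq_top_iff]
    rintro v -
    rw [basis_decomp v]
    refine Submodule.sum_mem _ fun i _ => Submodule.smul_mem _ _ ?_
    rcases Nat.eq_zero_or_pos (i : ℕ) with h | h
    · rw [h]; exact mE0
    · exact mEm _ h (by have := i.isLt; omega)
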